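/- Let pmax ≥ 0. For all real p, q with 0 ≤ p, -0.4·pmax ≤ q ≤ 0.6·pmax, p ≤ (1/2)·q + pmax, and p ≤ -(1/3)·q + pmax, one has p² + q² ≤ pmax². -/
import Mathlib

/-- Every operating point of the 'd-curve' PQ-capability polytope has apparent power
at most the nominal rating `pmax`. -/
theorem dcurve_capability_apparent_power (pmax : ℝ) (hpmax : 0 ≤ pmax)
    (p q : ℝ) (hp : 0 ≤ p)
    (hq₁ : -(0.4 * pmax) ≤ q) (hq₂ : q ≤ 0.6 * pmax)
    (hup₁ : p ≤ (1 / 2) * q + pmax) (hup₂ : p ≤ -(1 / 3) * q + pmax) :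
    p ^ 2 + q ^ 2 ≤ pmax ^ 2 := by
  rcases le_or_gt 0 q with hq | hq
  · nlinarith [mul_nonneg hp (by linarith : (0:ℝ) ≤ -(1/3)*q + pmax - p),
      mul_nonneg (by linarith : (0:ℝ) ≤ -(1/3)*q + pmax) (by linarith : (0:ℝ) ≤ -(1/3)*q + pmax - p),
      mul_nonneg hq (by linarith : (0:ℝ) ≤ 0.6*pmax - q)]
  · nlinarith [mul_nonneg hp (by linarith : (0:ℝ) ≤ (1/2)*q + pmax - p),
      mul_nonneg (by linarith : (0:ℝ) ≤ (1/2)*q + pmax) (by linarith : (0:ℝ) ≤ (1/2)*q + pmax - p),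
      mul_nonneg (by linarith : (0:ℝ) ≤ q + 0.4*pmax) (by linarith : (0:ℝ) ≤ -q)]
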